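/- For 0 < σ ≤ β, the function h(γ) = 1 − 4γσ/(1 + 2γσ + γ²σβ) on (0,∞) is minimized at γ = 1/√(βσ), and the minimum value is (√(β/σ) − 1)/(√(β/σ) + 1). -/
import Mathlib


theorem optimal_gamma_sm_cocoercive (σ β : ℝ) (hσ : 0 < σ) (hσβ : σ ≤ β) :
    (∀ γ : ℝ, 0 < γ →
      1 - 4 * (1 / Real.sqrt (β * σ)) * σ /
          (1 + 2 * (1 / Real.sqrt (β * σ)) * σ + (1 / Real.sqrt (β * σ)) ^ 2 * σ * β) ≤
        1 - 4 * γ * σ / (1 + 2 * γ * σ + γ ^ 2 * σ * β)) ∧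
    (1 - 4 * (1 / Real.sqrt (β * σ)) * σ /
        (1 + 2 * (1 / Real.sqrt (β * σ)) * σ + (1 / Real.sqrt (β * σ)) ^ 2 * σ * β) =
      (Real.sqrt (β / σ) - 1) / (Real.sqrt (β / σ) + 1)) := by
  have hβ : 0 < β := lt_of_lt_of_le hσ hσβ
  set s := Real.sqrt (β * σ) with hs
  have hs0 : 0 < s := Real.sqrt_pos.2 (by positivity)
  have hs2 : s ^ 2 = β * σ := Real.sq_sqrt (by positivity)
  have hDs : 0 < 1 + 2 * (1 / s) * σ + (1 / s) ^ 2 * σ * β := by positivity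
  constructor
  · intro γ hγ
    have hD : 0 < 1 + 2 * γ * σ + γ ^ 2 * σ * β := by positivity
    have h1 : (1 / s) ^ 2 * σ * β = 1 := by
      rw [div_pow, one_pow]; field_simp; nlinarith [hs2]
    have hLHS : 4 * (1 / s) * σ / (1 + 2 * (1 / s) * σ + (1 / s) ^ 2 * σ * β)
        = 2 * σ / (s + σ) := by
      rw [h1]; field_simp; ring
    have key : 4 * γ * σ / (1 + 2 * γ * σ + γ ^ 2 * σ * β) ≤ 2 * σ / (s + σ) := by
      rw [div_le_div_iff₀ hD (by positivity)]
      have h3 : γ ^ 2 * σ * s ^ 2 = γ ^ 2 * σ * (β * σ) := by rw [hs2]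
      nlinarith [mul_nonneg hσ.le (sq_nonneg (1 - γ * s)), h3, mul_pos hσ hs0]
    rw [hLHS]
    linarith
  · have hsq : Real.sqrt (β / σ) = Real.sqrt β / Real.sqrt σ := Real.sqrt_div hβ.le σ
    have hsmul : s = Real.sqrt β * Real.sqrt σ := Real.sqrt_mul hβ.le σ
    set t := Real.sqrt β with ht
    set u := Real.sqrt σ with hu
    have ht0 : 0 < t := Real.sqrt_pos.2 hβ
    have hu0 : 0 < u := Real.sqrt_pos.2 hσ
    have ht2 : t ^ 2 = β := Real.sq_sqrt hβ.le
    have hu2 : u ^ 2 = σ := Real.sq_sqrt hσ.le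
    have htu : 0 < t / u + 1 := by positivity
    rw [hsq, hsmul]
    rw [hsmul] at hDs
    rw [eq_div_iff (ne_of_gt htu), ← ht2, ← hu2]
    field_simp
    ring
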